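/- Let R, S be subrings of a C-algebra Q, and let B (an (R,S)-bimodule) and C (an (S,R)-bimodule) give inverse equivalences B⊗_S− : S-mod → R-mod and C⊗_R− : R-mod → S-mod. Let T be a multiplicatively closed subset of both R and S which is a left Ore set in R, and suppose C satisfies the Ore condition: for all t ∈ T, c ∈ C there exist t' ∈ T, c' ∈ C with c't = t'c. Then: (1) if an R-module N is T-torsion, so is the S-module C ⊗_R N; (2) if an S-module M is T-torsion-free, so is the R-module B ⊗_S M. -/

import Mathlib

noncomputable def tensorRel (Q : Type*) [Ring Q] [Algebra ℂ Q] (R : Subalgebra ℂ Q)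
    (C : Submodule ℂ Q) (N : Type*) [AddCommGroup N] [Module ↥R N] :
    AddSubgroup ((↥C × N) →₀ ℤ) :=
  AddSubgroup.closure
    ({x | ∃ c₁ c₂ c₁₂ : ↥C, ∃ n : N, (c₁₂ : Q) = (c₁ : Q) + (c₂ : Q) ∧
        x = Finsupp.single (c₁₂, n) 1 - Finsupp.single (c₁, n) 1
            - Finsupp.single (c₂, n) 1}
      ∪ {x | ∃ c : ↥C, ∃ n₁ n₂ : N,
        x = Finsupp.single (c, n₁ + n₂) 1 - Finsupp.single (c, n₁) 1
            - Finsupp.single (c, n₂) 1}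
      ∪ {x | ∃ c cr : ↥C, ∃ r : ↥R, ∃ n : N, (cr : Q) = (c : Q) * (r : Q) ∧
        x = Finsupp.single (cr, n) 1 - Finsupp.single (c, r • n) 1})

section Aux

private theorem freeAddHom_ext' {α : Type*} {H : Type*} [AddCommGroup H]
    {φ ψ : (α →₀ ℤ) →+ H} (h : ∀ a, φ (Finsupp.single a 1) = ψ (Finsupp.single a 1)) :
    φ = ψ := by
  apply Finsupp.addHom_ext
  intro a n
  have hs : (Finsupp.single a n : α →₀ ℤ) = n • Finsupp.single a 1 := by
    rw [Finsupp.smul_single]; simp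
  rw [hs, map_zsmul, map_zsmul, h]

private theorem quotAddHom_ext' {α : Type*} {s : AddSubgroup (α →₀ ℤ)} {H : Type*}
    [AddCommGroup H] {φ ψ : ((α →₀ ℤ) ⧸ s) →+ H}
    (h : ∀ a, φ (QuotientAddGroup.mk (Finsupp.single a 1))
        = ψ (QuotientAddGroup.mk (Finsupp.single a 1))) : φ = ψ := by
  have key : φ.comp (QuotientAddGroup.mk' s) = ψ.comp (QuotientAddGroup.mk' s) :=
    freeAddHom_ext' h
  refine AddMonoidHom.ext fun x => ?_
  obtain ⟨w, rfl⟩ := QuotientAddGroup.mk'_surjective s x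
  exact DFunLike.congr_fun key w

variable {Q : Type*} [Ring Q] [Algebra ℂ Q]

private theorem tensorRel_lift (R : Subalgebra ℂ Q) (C : Submodule ℂ Q)
    (N : Type*) [AddCommGroup N] [Module ↥R N]
    {H : Type*} [AddCommGroup H] (f : ↥C × N → H)
    (h1 : ∀ (c₁ c₂ c₁₂ : ↥C) (n : N), (c₁₂ : Q) = (c₁ : Q) + (c₂ : Q) →
      f (c₁₂, n) = f (c₁, n) + f (c₂, n))
    (h2 : ∀ (c : ↥C) (n₁ n₂ : N), f (c, n₁ + n₂) = f (c, n₁) + f (c, n₂))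
    (h3 : ∀ (c cr : ↥C) (r : ↥R) (n : N), (cr : Q) = (c : Q) * (r : Q) →
      f (cr, n) = f (c, r • n)) :
    ∃ φ : ((↥C × N) →₀ ℤ) ⧸ tensorRel Q R C N →+ H,
      ∀ p : ↥C × N, φ (QuotientAddGroup.mk (Finsupp.single p 1)) = f p := by
  set L : ((↥C × N) →₀ ℤ) →+ H :=
    Finsupp.liftAddHom (fun p => zmultiplesHom H (f p)) with hL
  have hLs : ∀ p, L (Finsupp.single p 1) = f p := fun p => by
    rw [hL, Finsupp.liftAddHom_apply_single, zmultiplesHom_apply, one_zsmul]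
  have hker : tensorRel Q R C N ≤ L.ker := by
    rw [tensorRel, AddSubgroup.closure_le]
    rintro x ((⟨c₁, c₂, c₁₂, n, hc, rfl⟩ | ⟨c, n₁, n₂, rfl⟩) | ⟨c, cr, r, n, hc, rfl⟩) <;>
      simp only [SetLike.mem_coe, AddMonoidHom.mem_ker, map_sub, hLs]
    · rw [h1 c₁ c₂ c₁₂ n hc]; abel
    · rw [h2]; abel
    · rw [h3 c cr r n hc]; abel
  exact ⟨QuotientAddGroup.lift _ L hker, fun p => by
    rw [QuotientAddGroup.lift_mk', hLs]⟩

private theorem tensorRel_stable (R : Subalgebra ℂ Q) (C : Submodule ℂ Q)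
    (N : Type*) [AddCommGroup N] [Module ↥R N]
    (t : Q) (htC : ∀ x ∈ C, t * x ∈ C) {z : (↥C × N) →₀ ℤ}
    (hz : z ∈ tensorRel Q R C N) :
    Finsupp.mapDomain
      (fun p : ↥C × N => ((⟨t * (p.1 : Q), htC _ p.1.2⟩ : ↥C), p.2)) z
      ∈ tensorRel Q R C N := by
  set τ : ↥C × N → ↥C × N :=
    fun p => ((⟨t * (p.1 : Q), htC _ p.1.2⟩ : ↥C), p.2) with hτ
  have key : tensorRel Q R C N ≤
      (tensorRel Q R C N).comap (Finsupp.mapDomain.addMonoidHom τ) := by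
    nth_rewrite 1 [tensorRel]
    rw [AddSubgroup.closure_le]
    rintro x ((⟨c₁, c₂, c₁₂, n, hc, rfl⟩ | ⟨c, n₁, n₂, rfl⟩) | ⟨c, cr, r, n, hc, rfl⟩) <;>
      · simp only [SetLike.mem_coe, AddSubgroup.mem_comap, map_sub,
          Finsupp.mapDomain.addMonoidHom_apply, Finsupp.mapDomain_single]
        apply AddSubgroup.subset_closure
        first
        | exact Or.inl (Or.inl ⟨_, _, _, n, by simp only [hτ]; rw [hc, mul_add], rfl⟩)
        | exact Or.inl (Or.inr ⟨_, n₁, n₂, rfl⟩)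
        | exact Or.inr ⟨_, _, r, n, by simp only [hτ]; rw [hc, mul_assoc], rfl⟩
  exact key hz

end Aux
theorem statement17 {Q : Type*} [Ring Q] [Algebra ℂ Q]
    (R S : Subalgebra ℂ Q) (B C : Submodule ℂ Q)
    (hRB : R.toSubmodule * B ≤ B) (hBS : B * S.toSubmodule ≤ B)
    (hSC : S.toSubmodule * C ≤ C) (hCR : C * R.toSubmodule ≤ C)
    (hinv1 : B * C = R.toSubmodule) (hinv2 : C * B = S.toSubmodule)
    (T : Set Q) (hT1 : (1 : Q) ∈ T) (hTmul : ∀ t ∈ T, ∀ t' ∈ T, t * t' ∈ T)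
    (hTR : T ⊆ (R : Set Q)) (hTS : T ⊆ (S : Set Q))
    (hOreR : ∀ t ∈ T, ∀ r ∈ (R : Set Q), ∃ t' ∈ T, ∃ r' ∈ (R : Set Q), t' * r = r' * t)
    (hOreC : ∀ t ∈ T, ∀ c, c ∈ C → ∃ t' ∈ T, ∃ c', c' ∈ C ∧ c' * t = t' * c)
    (hTC : ∀ t ∈ T, ∀ x, x ∈ C → t * x ∈ C)
    (hTB : ∀ t ∈ T, ∀ x, x ∈ B → t * x ∈ B)
    (N : Type*) [AddCommGroup N] [Module ↥R N]
    (M : Type*) [AddCommGroup M] [Module ↥S M] :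
    -- (1)
    ((∀ x : N, ∃ t, ∃ ht : t ∈ T, (⟨t, hTR ht⟩ : ↥R) • x = 0) →
      ∀ z : (↥C × N) →₀ ℤ, ∃ t, ∃ ht : t ∈ T,
        Finsupp.mapDomain
          (fun p : ↥C × N => ((⟨t * (p.1 : Q), hTC t ht _ p.1.2⟩ : ↥C), p.2)) z
          ∈ tensorRel Q R C N)
    -- (2)
    ∧ ((∀ m : M, ∀ t, ∀ ht : t ∈ T, (⟨t, hTS ht⟩ : ↥S) • m = 0 → m = 0) →
      ∀ z : (↥B × M) →₀ ℤ, ∀ t, ∀ ht : t ∈ T,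
        Finsupp.mapDomain
          (fun p : ↥B × M => ((⟨t * (p.1 : Q), hTB t ht _ p.1.2⟩ : ↥B), p.2)) z
          ∈ tensorRel Q S B M →
        z ∈ tensorRel Q S B M) := by
  constructor
  · -- Part (1)
    intro htor z
    induction z using Finsupp.induction with
    | zero =>
      exact ⟨1, hT1, by rw [Finsupp.mapDomain_zero]; exact zero_mem _⟩
    | single_add p a f hp hane ih =>
      obtain ⟨t₂, ht₂, h₂⟩ := ih
      obtain ⟨c, n⟩ := p
      obtain ⟨t₀, ht₀, hn⟩ := htor n
      obtain ⟨t₃, ht₃, c', hc', hce⟩ := hOreC t₀ ht₀ (t₂ * (c : Q)) (hTC t₂ ht₂ _ c.2)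
      have htt : t₃ * t₂ ∈ T := hTmul _ ht₃ _ ht₂
      refine ⟨t₃ * t₂, htt, ?_⟩
      have hfun : (fun p : ↥C × N =>
            ((⟨(t₃ * t₂) * (p.1 : Q), hTC _ htt _ p.1.2⟩ : ↥C), p.2))
          = (fun p : ↥C × N => ((⟨t₃ * (p.1 : Q), hTC _ ht₃ _ p.1.2⟩ : ↥C), p.2)) ∘
            (fun p : ↥C × N => ((⟨t₂ * (p.1 : Q), hTC _ ht₂ _ p.1.2⟩ : ↥C), p.2)) := by
        funext p; exact Prod.ext (Subtype.ext (mul_assoc _ _ _)) rfl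
      rw [hfun, Finsupp.mapDomain_comp, Finsupp.mapDomain_add, Finsupp.mapDomain_single,
        Finsupp.mapDomain_add, Finsupp.mapDomain_single]
      refine add_mem ?_ (tensorRel_stable R C N t₃ (fun x hx => hTC _ ht₃ x hx) h₂)
      -- the single part
      have hmem : t₃ * (t₂ * (c : Q)) ∈ C := hTC _ ht₃ _ (hTC _ ht₂ _ c.2)
      have hsingle : Finsupp.single
          ((⟨t₃ * (t₂ * (c : Q)), hmem⟩ : ↥C), n) (1 : ℤ) ∈ tensorRel Q R C N := by
        have hc't₀ : c' * t₀ ∈ C := hce ▸ hmem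
        have hgen3 : Finsupp.single ((⟨t₃ * (t₂ * (c : Q)), hmem⟩ : ↥C), n) (1 : ℤ)
            - Finsupp.single ((⟨c', hc'⟩ : ↥C), (⟨t₀, hTR ht₀⟩ : ↥R) • n) 1
            ∈ tensorRel Q R C N := by
          apply AddSubgroup.subset_closure
          exact Or.inr ⟨⟨c', hc'⟩, _, ⟨t₀, hTR ht₀⟩, n, hce.symm, rfl⟩
        have hzero : Finsupp.single ((⟨c', hc'⟩ : ↥C), (0 : N)) (1 : ℤ)
            ∈ tensorRel Q R C N := by
          have hg2 : Finsupp.single ((⟨c', hc'⟩ : ↥C), (0 : N) + 0) (1 : ℤ)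
              - Finsupp.single ((⟨c', hc'⟩ : ↥C), (0 : N)) 1
              - Finsupp.single ((⟨c', hc'⟩ : ↥C), (0 : N)) 1 ∈ tensorRel Q R C N :=
            AddSubgroup.subset_closure (Or.inl (Or.inr ⟨_, 0, 0, rfl⟩))
          rw [add_zero] at hg2
          have := neg_mem hg2
          simpa using this
        have := add_mem hgen3 hzero
        rw [hn] at this
        simpa using this
      have : Finsupp.single ((⟨t₃ * (t₂ * (c : Q)), hmem⟩ : ↥C), n) a
          ∈ tensorRel Q R C N := by
        have := AddSubgroup.zsmul_mem _ hsingle a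
        rwa [Finsupp.smul_single, smul_eq_mul, mul_one] at this
      exact this
  · -- Part (2)
    intro hM z t ht hz
    rw [← QuotientAddGroup.eq_zero_iff (N := tensorRel Q S B M) z]
    have hSmem : ∀ {c b : Q}, c ∈ C → b ∈ B → c * b ∈ S := fun hc hb =>
      (Subalgebra.mem_toSubmodule S).mp (hinv2 ▸ Submodule.mul_mem_mul hc hb)
    have hBmem : ∀ {q b : Q}, q ∈ (R : Set Q) → b ∈ B → q * b ∈ B := fun hq hb =>
      hRB (Submodule.mul_mem_mul ((Subalgebra.mem_toSubmodule R).mpr hq) hb)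
    -- the maps Ψ_c : B ⊗ M → M, b ⊗ m ↦ (c b) • m
    have hΨe : ∀ c (hc : c ∈ C),
        ∃ Ψ : ((↥B × M) →₀ ℤ) ⧸ tensorRel Q S B M →+ M,
          ∀ p : ↥B × M, Ψ (QuotientAddGroup.mk (Finsupp.single p 1))
            = (⟨c * (p.1 : Q), hSmem hc p.1.2⟩ : ↥S) • p.2 := by
      intro c hc
      refine tensorRel_lift S B M
        (fun p => (⟨c * (p.1 : Q), hSmem hc p.1.2⟩ : ↥S) • p.2) ?_ ?_ ?_
      · intro b₁ b₂ b₁₂ m h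
        have he : (⟨c * (b₁₂ : Q), hSmem hc b₁₂.2⟩ : ↥S)
            = ⟨c * (b₁ : Q), hSmem hc b₁.2⟩ + ⟨c * (b₂ : Q), hSmem hc b₂.2⟩ :=
          Subtype.ext (by show c * (b₁₂ : Q) = c * b₁ + c * b₂; rw [h, mul_add])
        show (⟨c * (b₁₂ : Q), _⟩ : ↥S) • m = _
        rw [he, add_smul]
      · intro b m₁ m₂; exact smul_add _ m₁ m₂
      · intro b bs s m h
        have he : (⟨c * (bs : Q), hSmem hc bs.2⟩ : ↥S)
            = (⟨c * (b : Q), hSmem hc b.2⟩ : ↥S) * s :=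
          Subtype.ext (by show c * (bs : Q) = c * b * s; rw [h, mul_assoc])
        show (⟨c * (bs : Q), _⟩ : ↥S) • m = _
        rw [he, mul_smul]
    choose Ψ hΨ using hΨe
    -- the maps χ_b : M → B ⊗ M, m ↦ b ⊗ m
    have hχe : ∀ b (hb : b ∈ B),
        ∃ χ : M →+ ((↥B × M) →₀ ℤ) ⧸ tensorRel Q S B M,
          ∀ m, χ m = QuotientAddGroup.mk (Finsupp.single ((⟨b, hb⟩ : ↥B), m) 1) := by
      intro b hb
      refine ⟨AddMonoidHom.mk'
        (fun m => QuotientAddGroup.mk (Finsupp.single ((⟨b, hb⟩ : ↥B), m) 1)) ?_,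
        fun m => rfl⟩
      intro m₁ m₂
      rw [← QuotientAddGroup.mk_add, QuotientAddGroup.eq_iff_sub_mem, sub_add_eq_sub_sub]
      exact AddSubgroup.subset_closure (Or.inl (Or.inr ⟨⟨b, hb⟩, m₁, m₂, rfl⟩))
    choose χ hχ using hχe
    -- the maps μ_q : B ⊗ M → B ⊗ M, b ⊗ m ↦ (q b) ⊗ m, for q ∈ R
    have hμe : ∀ q (hq : q ∈ (R : Set Q)),
        ∃ μ : ((↥B × M) →₀ ℤ) ⧸ tensorRel Q S B M →+
            ((↥B × M) →₀ ℤ) ⧸ tensorRel Q S B M,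
          ∀ p : ↥B × M, μ (QuotientAddGroup.mk (Finsupp.single p 1))
            = QuotientAddGroup.mk
                (Finsupp.single ((⟨q * (p.1 : Q), hBmem hq p.1.2⟩ : ↥B), p.2) 1) := by
      intro q hq
      refine tensorRel_lift S B M (fun p => QuotientAddGroup.mk
        (Finsupp.single ((⟨q * (p.1 : Q), hBmem hq p.1.2⟩ : ↥B), p.2) 1)) ?_ ?_ ?_
      · intro b₁ b₂ b₁₂ m h
        show QuotientAddGroup.mk _ = QuotientAddGroup.mk _ + QuotientAddGroup.mk _
        rw [← QuotientAddGroup.mk_add, QuotientAddGroup.eq_iff_sub_mem, sub_add_eq_sub_sub]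
        refine AddSubgroup.subset_closure (Or.inl (Or.inl
          ⟨⟨q * (b₁ : Q), hBmem hq b₁.2⟩, ⟨q * (b₂ : Q), hBmem hq b₂.2⟩,
           ⟨q * (b₁₂ : Q), hBmem hq b₁₂.2⟩, m, ?_, rfl⟩))
        show q * (b₁₂ : Q) = q * b₁ + q * b₂
        rw [h, mul_add]
      · intro b m₁ m₂
        show QuotientAddGroup.mk _ = QuotientAddGroup.mk _ + QuotientAddGroup.mk _
        rw [← QuotientAddGroup.mk_add, QuotientAddGroup.eq_iff_sub_mem, sub_add_eq_sub_sub]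
        exact AddSubgroup.subset_closure (Or.inl (Or.inr ⟨_, m₁, m₂, rfl⟩))
      · intro b bs s m h
        show QuotientAddGroup.mk _ = QuotientAddGroup.mk _
        rw [QuotientAddGroup.eq_iff_sub_mem]
        refine AddSubgroup.subset_closure (Or.inr
          ⟨⟨q * (b : Q), hBmem hq b.2⟩, ⟨q * (bs : Q), hBmem hq bs.2⟩, s, m, ?_, rfl⟩)
        show q * (bs : Q) = q * b * s
        rw [h, mul_assoc]
    choose μ hμ using hμe
    -- compatibility of μ_t with mapDomain
    have hcompat : μ t (hTR ht) (QuotientAddGroup.mk z)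
        = QuotientAddGroup.mk (Finsupp.mapDomain
            (fun p : ↥B × M => ((⟨t * (p.1 : Q), hTB t ht _ p.1.2⟩ : ↥B), p.2)) z) := by
      have hhom : (μ t (hTR ht)).comp (QuotientAddGroup.mk' (tensorRel Q S B M))
          = (QuotientAddGroup.mk' (tensorRel Q S B M)).comp
            (Finsupp.mapDomain.addMonoidHom
              (fun p : ↥B × M => ((⟨t * (p.1 : Q), hTB t ht _ p.1.2⟩ : ↥B), p.2))) := by
        apply freeAddHom_ext'
        intro p
        show μ t (hTR ht) (QuotientAddGroup.mk (Finsupp.single p 1))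
          = QuotientAddGroup.mk (Finsupp.mapDomain _ (Finsupp.single p 1))
        rw [hμ, Finsupp.mapDomain_single]
      exact DFunLike.congr_fun hhom z
    have hμt0 : μ t (hTR ht) (QuotientAddGroup.mk z) = 0 := by
      rw [hcompat]; exact (QuotientAddGroup.eq_zero_iff _).mpr hz
    -- Step A : all Ψ_c vanish on z
    have hA : ∀ c (hc : c ∈ C), Ψ c hc (QuotientAddGroup.mk z) = 0 := by
      intro c hc
      obtain ⟨t', ht', c', hc', hcc⟩ := hOreC t ht c hc
      have hhom : (Ψ c' hc').comp (μ t (hTR ht))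
          = (DistribMulAction.toAddMonoidHom M (⟨t', hTS ht'⟩ : ↥S)).comp (Ψ c hc) := by
        apply quotAddHom_ext'
        intro p
        simp only [AddMonoidHom.comp_apply, hμ, hΨ, DistribMulAction.toAddMonoidHom_apply]
        rw [← mul_smul]
        congr 1
        refine Subtype.ext ?_
        show c' * (t * (p.1 : Q)) = t' * (c * p.1)
        rw [← mul_assoc, hcc, mul_assoc]
      have := DFunLike.congr_fun hhom (QuotientAddGroup.mk z)
      simp only [AddMonoidHom.comp_apply, hμt0, map_zero,
        DistribMulAction.toAddMonoidHom_apply] at this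
      exact hM _ t' ht' this.symm
    -- Step B : μ_1 = id written through the Ψ's
    have h1mem : (1 : Q) ∈ B * C := by
      rw [hinv1]; exact (Subalgebra.mem_toSubmodule R).mpr R.one_mem
    have key : (1 : Q) ∈ (R : Set Q) ∧
        ∀ hq : (1 : Q) ∈ (R : Set Q), μ 1 hq (QuotientAddGroup.mk z) = 0 := by
      refine Submodule.mul_induction_on h1mem ?_ ?_
      · intro b hb c hc
        have hqR : b * c ∈ (R : Set Q) :=
          (Subalgebra.mem_toSubmodule R).mp (hinv1 ▸ Submodule.mul_mem_mul hb hc)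
        refine ⟨hqR, fun hq => ?_⟩
        have hhom : μ (b * c) hq = (χ b hb).comp (Ψ c hc) := by
          apply quotAddHom_ext'
          intro p
          simp only [AddMonoidHom.comp_apply, hμ, hΨ, hχ]
          rw [QuotientAddGroup.eq_iff_sub_mem]
          exact AddSubgroup.subset_closure (Or.inr
            ⟨⟨b, hb⟩, ⟨b * c * (p.1 : Q), hBmem hq p.1.2⟩,
             ⟨c * (p.1 : Q), hSmem hc p.1.2⟩, p.2, mul_assoc b c p.1, rfl⟩)
        rw [hhom, AddMonoidHom.comp_apply, hA c hc, map_zero]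
      · rintro x y ⟨hx, hx0⟩ ⟨hy, hy0⟩
        have hxy : x + y ∈ (R : Set Q) := add_mem hx hy
        refine ⟨hxy, fun hq => ?_⟩
        have hhom : μ (x + y) hq = μ x hx + μ y hy := by
          apply quotAddHom_ext'
          intro p
          simp only [AddMonoidHom.add_apply, hμ]
          rw [← QuotientAddGroup.mk_add, QuotientAddGroup.eq_iff_sub_mem,
            sub_add_eq_sub_sub]
          refine AddSubgroup.subset_closure (Or.inl (Or.inl
            ⟨⟨x * (p.1 : Q), hBmem hx p.1.2⟩, ⟨y * (p.1 : Q), hBmem hy p.1.2⟩,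
             ⟨(x + y) * (p.1 : Q), hBmem hq p.1.2⟩, p.2, ?_, rfl⟩))
          show (x + y) * (p.1 : Q) = x * p.1 + y * p.1
          rw [add_mul]
        rw [hhom, AddMonoidHom.add_apply, hx0 hx, hy0 hy, add_zero]
    obtain ⟨h1R, h1z⟩ := key
    have hid : μ 1 h1R = AddMonoidHom.id _ := by
      apply quotAddHom_ext'
      intro p
      simp only [hμ, AddMonoidHom.id_apply]
      have hp : ((⟨(1 : Q) * (p.1 : Q), hBmem h1R p.1.2⟩ : ↥B), p.2) = p :=
        Prod.ext (Subtype.ext (one_mul _)) rfl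
      rw [hp]
    have := h1z h1R
    rwa [hid, AddMonoidHom.id_apply] at this
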